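/- For every integer n ≥ 1, every 1 ≤ i ≤ n, and all 0 ≤ a, b ≤ n, the following identities hold in ℂ[W,Z]: (Q_a, Q_b)_{i,W} + (Q_a, Q_{b+1})_{i,Z} = 2·Q_a·Q_b^{[i;i]} and (Q_a, Q_b)_{i,W} + (Q_{a+1}, Q_b)_{i,Z} = 2·Q_a^{[i;i]}·Q_b, where Q_m := 0 and Q_m^{[i;i]} := 0 for m < 0 or m > n (respectively m > n−1). -/

import Mathlib

noncomputable section

/-- Variables for polynomials in the entries of two `N × N` matrices `W` (`Sum.inl`) and
`Z` (`Sum.inr`). -/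
abbrev WZVars (N : ℕ) := (Fin N × Fin N) ⊕ (Fin N × Fin N)

/-- The polynomial `Q_a(W,Z)` defined by `det(W + λ Z) = Σ_a Q_a(W,Z) λ^a`. -/
def Qpoly (N a : ℕ) : MvPolynomial (WZVars N) ℂ :=
  Polynomial.coeff
    (Matrix.det (Matrix.of fun s t : Fin N =>
      Polynomial.C (MvPolynomial.X (Sum.inl (s, t))) +
        Polynomial.X * Polynomial.C (MvPolynomial.X (Sum.inr (s, t))))) a

/-- The polynomial `Q_a^{[i;i]}(W,Z)`: the coefficient of `λ^a` in the determinant of the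
matrix obtained from `W + λ Z` (of size `n+1`) by deleting row `i` and column `i`. -/
def QpolyMinor (n : ℕ) (i : Fin (n + 1)) (a : ℕ) : MvPolynomial (WZVars (n + 1)) ℂ :=
  Polynomial.coeff
    (Matrix.det (Matrix.of fun s t : Fin n =>
      Polynomial.C (MvPolynomial.X (Sum.inl (i.succAbove s, i.succAbove t))) +
        Polynomial.X *
          Polynomial.C (MvPolynomial.X (Sum.inr (i.succAbove s, i.succAbove t))))) a

/-- The bracket `(Q,Q')_{i,W} = Σ_{s,t} w_{s,t}·(∂Q/∂w_{s,i}·∂Q'/∂w_{i,t} + ∂Q/∂w_{i,t}·∂Q'/∂w_{s,i})`. -/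
def brW (N : ℕ) (i : Fin N) (Q Q' : MvPolynomial (WZVars N) ℂ) : MvPolynomial (WZVars N) ℂ :=
  ∑ s : Fin N, ∑ t : Fin N,
    MvPolynomial.X (Sum.inl (s, t)) *
      (MvPolynomial.pderiv (Sum.inl (s, i)) Q * MvPolynomial.pderiv (Sum.inl (i, t)) Q' +
        MvPolynomial.pderiv (Sum.inl (i, t)) Q * MvPolynomial.pderiv (Sum.inl (s, i)) Q')

/-- The bracket `(Q,Q')_{i,Z} = Σ_{s,t} z_{s,t}·(∂Q/∂z_{s,i}·∂Q'/∂z_{i,t} + ∂Q/∂z_{i,t}·∂Q'/∂z_{s,i})`. -/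
def brZ (N : ℕ) (i : Fin N) (Q Q' : MvPolynomial (WZVars N) ℂ) : MvPolynomial (WZVars N) ℂ :=
  ∑ s : Fin N, ∑ t : Fin N,
    MvPolynomial.X (Sum.inr (s, t)) *
      (MvPolynomial.pderiv (Sum.inr (s, i)) Q * MvPolynomial.pderiv (Sum.inr (i, t)) Q' +
        MvPolynomial.pderiv (Sum.inr (i, t)) Q * MvPolynomial.pderiv (Sum.inr (s, i)) Q')

namespace Stmt13Aux
open Polynomial Matrix Finset

variable {σ : Type*}
abbrev R (σ : Type*) := MvPolynomial σ ℂ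

/-- Coefficientwise partial derivative on `R[X]`. -/
def pd (v : σ) (p : Polynomial (R σ)) : Polynomial (R σ) :=
  ⟨AddMonoidAlgebra.ofCoeff (p.toFinsupp.coeff.mapRange (fun c => MvPolynomial.pderiv v c) (map_zero _))⟩

lemma coeff_pd (v : σ) (p : Polynomial (R σ)) (k : ℕ) :
    (pd v p).coeff k = MvPolynomial.pderiv v (p.coeff k) := by
  rcases p with ⟨p⟩
  simp [pd, Polynomial.coeff, Finsupp.mapRange_apply]

lemma pd_add (v : σ) (p q : Polynomial (R σ)) : pd v (p + q) = pd v p + pd v q := by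
  ext k; simp [coeff_pd]

lemma pd_sum {ι : Type*} (v : σ) (s : Finset ι) (f : ι → Polynomial (R σ)) :
    pd v (∑ x ∈ s, f x) = ∑ x ∈ s, pd v (f x) := by
  ext k; simp [coeff_pd, finset_sum_coeff]

lemma pd_mul (v : σ) (p q : Polynomial (R σ)) :
    pd v (p * q) = pd v p * q + p * pd v q := by
  ext k
  simp only [coeff_pd, coeff_mul, coeff_add, map_sum, MvPolynomial.pderiv_mul,
    Finset.sum_add_distrib]

lemma pd_C (v : σ) (r : R σ) : pd v (C r) = C (MvPolynomial.pderiv v r) := by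
  ext k; simp only [coeff_pd, coeff_C]; split <;> simp

lemma pd_one (v : σ) : pd v 1 = 0 := by
  rw [← C_1, pd_C]; simp

lemma pd_X (v : σ) : pd v (X : Polynomial (R σ)) = 0 := by
  ext k; simp only [coeff_pd, coeff_X, coeff_zero]; split <;> simp

lemma pd_intCast (v : σ) (m : ℤ) : pd v ((m : ℤ) : Polynomial (R σ)) = 0 := by
  rw [← map_intCast (C : R σ →+* Polynomial (R σ)), pd_C]; simp

lemma pd_prod {ι : Type*} [DecidableEq ι] (v : σ) (s : Finset ι) (f : ι → Polynomial (R σ)) :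
    pd v (∏ k ∈ s, f k) = ∑ j ∈ s, pd v (f j) * ∏ k ∈ s.erase j, f k := by
  induction s using Finset.induction_on with
  | empty => simp [pd_one]
  | insert x s hx ih =>
    rw [Finset.prod_insert hx, pd_mul, ih, Finset.sum_insert hx, Finset.erase_insert hx,
      Finset.mul_sum]
    rw [add_right_inj]
    refine Finset.sum_congr rfl fun j hj => ?_
    rw [Finset.erase_insert_of_ne (by rintro rfl; exact hx hj), Finset.prod_insert
      (fun h => hx (Finset.mem_of_mem_erase h))]
    ring


lemma det_updateCol_perm {m : ℕ} (N : Matrix (Fin m) (Fin m) (Polynomial (R σ)))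
    (j : Fin m) (c : Fin m → Polynomial (R σ)) :
    det (N.updateCol j c) =
      ∑ τ : Equiv.Perm (Fin m),
        ((Equiv.Perm.sign τ : ℤ) : Polynomial (R σ)) *
          (c (τ j) * ∏ k ∈ Finset.univ.erase j, N (τ k) k) := by
  rw [det_apply']
  refine Finset.sum_congr rfl fun τ _ => ?_
  congr 1
  rw [← Finset.mul_prod_erase _ _ (Finset.mem_univ j)]
  congr 1
  · simp [Matrix.updateCol_apply]
  · refine Finset.prod_congr rfl fun k hk => ?_
    simp [Matrix.updateCol_apply, Finset.ne_of_mem_erase hk]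

lemma pd_det {m : ℕ} (v : σ) (N : Matrix (Fin m) (Fin m) (Polynomial (R σ))) :
    pd v (det N) = ∑ j, ∑ p, adjugate N j p * pd v (N p j) := by
  have rhs : ∀ j : Fin m, ∑ p, adjugate N j p * pd v (N p j) =
      det (N.updateCol j fun p => pd v (N p j)) := by
    intro j
    rw [← Matrix.cramer_apply, Matrix.cramer_eq_adjugate_mulVec]
    rfl
  simp only [rhs, det_updateCol_perm]
  rw [det_apply', pd_sum]
  rw [Finset.sum_comm]
  refine Finset.sum_congr rfl fun τ _ => ?_
  rw [pd_mul, pd_intCast, zero_mul, zero_add, pd_prod, Finset.mul_sum]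



/-- The matrix `W + λ Z` over `R[X]`. -/
def Mm (N : ℕ) : Matrix (Fin N) (Fin N) (Polynomial (R (WZVars N))) :=
  Matrix.of fun s t : Fin N =>
    Polynomial.C (MvPolynomial.X (Sum.inl (s, t))) +
      Polynomial.X * Polynomial.C (MvPolynomial.X (Sum.inr (s, t)))

lemma sum_adj_mul (N : ℕ) (i t : Fin N) :
    ∑ s, Mm N s t * adjugate (Mm N) i s = if i = t then det (Mm N) else 0 := by
  have h2 : (adjugate (Mm N) * Mm N) i t
      = ((det (Mm N)) • (1 : Matrix (Fin N) (Fin N) _)) i t := by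
    rw [Matrix.adjugate_mul]
  simpa [Matrix.mul_apply, Matrix.one_apply, mul_ite, mul_comm] using h2

lemma sum_mul_adj (N : ℕ) (s i : Fin N) :
    ∑ t, Mm N s t * adjugate (Mm N) t i = if s = i then det (Mm N) else 0 := by
  have h2 : (Mm N * adjugate (Mm N)) s i
      = ((det (Mm N)) • (1 : Matrix (Fin N) (Fin N) _)) s i := by
    rw [Matrix.mul_adjugate]
  simpa [Matrix.mul_apply, Matrix.one_apply, mul_ite, mul_comm] using h2

lemma combine (N : ℕ) (s t : Fin N) (p : Polynomial (R (WZVars N))) (a : ℕ) :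
    MvPolynomial.X (Sum.inl (s, t)) * p.coeff a +
      MvPolynomial.X (Sum.inr (s, t)) * (Polynomial.X * p).coeff a
      = (Mm N s t * p).coeff a := by
  show _ = ((Polynomial.C (MvPolynomial.X (Sum.inl (s, t))) +
      Polynomial.X * Polynomial.C (MvPolynomial.X (Sum.inr (s, t)))) * p).coeff a
  rw [add_mul, coeff_add, coeff_C_mul]
  congr 1
  rw [mul_comm Polynomial.X (Polynomial.C _), mul_assoc, coeff_C_mul]



set_option maxHeartbeats 1000000 in
lemma pd_det_w (N : ℕ) (s t : Fin N) :
    pd (Sum.inl (s, t)) (det (Mm N)) = adjugate (Mm N) t s := by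
  classical
  rw [pd_det]
  have h : ∀ p j : Fin N, pd (Sum.inl (s, t)) (Mm N p j)
      = if j = t then (if p = s then 1 else 0) else 0 := by
    intro p j
    have e : Mm N p j = Polynomial.C (MvPolynomial.X (Sum.inl (p, j))) +
      Polynomial.X * Polynomial.C (MvPolynomial.X (Sum.inr (p, j))) := rfl
    rw [e, pd_add, pd_mul, pd_X, pd_C, pd_C]
    simp only [MvPolynomial.pderiv_X, zero_mul, Pi.single_apply]
    by_cases h1 : j = t <;> by_cases h2 : p = s <;>
      simp [h1, h2, Prod.ext_iff]
  simp only [h, mul_ite, mul_one, mul_zero]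
  rw [Finset.sum_eq_single t]
  · rw [Finset.sum_eq_single s] <;> simp +contextual
  · intro j _ hj; simp [hj]
  · simp

set_option maxHeartbeats 1000000 in
lemma pd_det_z (N : ℕ) (s t : Fin N) :
    pd (Sum.inr (s, t)) (det (Mm N)) = Polynomial.X * adjugate (Mm N) t s := by
  classical
  rw [pd_det]
  have h : ∀ p j : Fin N, pd (Sum.inr (s, t)) (Mm N p j)
      = if j = t then (if p = s then Polynomial.X else 0) else 0 := by
    intro p j
    have e : Mm N p j = Polynomial.C (MvPolynomial.X (Sum.inl (p, j))) +
      Polynomial.X * Polynomial.C (MvPolynomial.X (Sum.inr (p, j))) := rfl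
    rw [e, pd_add, pd_mul, pd_X, pd_C, pd_C]
    simp only [MvPolynomial.pderiv_X, zero_mul, Pi.single_apply]
    by_cases h1 : j = t <;> by_cases h2 : p = s <;>
      simp [h1, h2, Prod.ext_iff]
  simp only [h, mul_ite, mul_zero]
  rw [Finset.sum_eq_single t]
  · rw [Finset.sum_eq_single s]
    · simp [mul_comm]
    · intro j _ hj; simp [hj]
    · simp
  · intro j _ hj; simp [hj]
  · simp


lemma conj1 (N : ℕ) (i : Fin N) (a b : ℕ) :
    ((∑ s, ∑ t, MvPolynomial.X (Sum.inl (s, t)) *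
        ((adjugate (Mm N) i s).coeff a * (adjugate (Mm N) t i).coeff b +
          (adjugate (Mm N) t i).coeff a * (adjugate (Mm N) i s).coeff b)) +
      ∑ s, ∑ t, MvPolynomial.X (Sum.inr (s, t)) *
        ((Polynomial.X * adjugate (Mm N) i s).coeff a * (adjugate (Mm N) t i).coeff b +
          (Polynomial.X * adjugate (Mm N) t i).coeff a * (adjugate (Mm N) i s).coeff b))
    = (det (Mm N)).coeff a * (adjugate (Mm N) i i).coeff b +
        (det (Mm N)).coeff a * (adjugate (Mm N) i i).coeff b := by
  classical
  rw [← Finset.sum_add_distrib]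
  simp only [← Finset.sum_add_distrib]
  have step : ∀ s t : Fin N,
      MvPolynomial.X (Sum.inl (s, t)) *
        ((adjugate (Mm N) i s).coeff a * (adjugate (Mm N) t i).coeff b +
          (adjugate (Mm N) t i).coeff a * (adjugate (Mm N) i s).coeff b) +
      MvPolynomial.X (Sum.inr (s, t)) *
        ((Polynomial.X * adjugate (Mm N) i s).coeff a * (adjugate (Mm N) t i).coeff b +
          (Polynomial.X * adjugate (Mm N) t i).coeff a * (adjugate (Mm N) i s).coeff b)
      = (Mm N s t * adjugate (Mm N) i s).coeff a * (adjugate (Mm N) t i).coeff b +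
          (Mm N s t * adjugate (Mm N) t i).coeff a * (adjugate (Mm N) i s).coeff b := by
    intro s t
    have c1 := combine N s t (adjugate (Mm N) i s) a
    have c2 := combine N s t (adjugate (Mm N) t i) a
    linear_combination (adjugate (Mm N) t i).coeff b * c1 +
      (adjugate (Mm N) i s).coeff b * c2
  simp only [step]
  simp only [Finset.sum_add_distrib]
  congr 1
  · rw [Finset.sum_comm]
    have h1 : ∀ t' : Fin N,
        ∑ s, (Mm N s t' * adjugate (Mm N) i s).coeff a * (adjugate (Mm N) t' i).coeff b
        = (if i = t' then (det (Mm N)).coeff a else 0) * (adjugate (Mm N) t' i).coeff b := by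
      intro t'
      rw [← Finset.sum_mul, ← Polynomial.finset_sum_coeff, sum_adj_mul]
      by_cases h : i = t' <;> simp [h]
    simp [h1, ite_mul, Finset.sum_ite_eq]
  · have h2 : ∀ s : Fin N,
        ∑ t, (Mm N s t * adjugate (Mm N) t i).coeff a * (adjugate (Mm N) i s).coeff b
        = (if s = i then (det (Mm N)).coeff a else 0) * (adjugate (Mm N) i s).coeff b := by
      intro s
      rw [← Finset.sum_mul, ← Polynomial.finset_sum_coeff, sum_mul_adj]
      by_cases h : s = i <;> simp [h]
    simp [h2, ite_mul, Finset.sum_ite_eq']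

lemma conj2 (N : ℕ) (i : Fin N) (a b : ℕ) :
    ((∑ s, ∑ t, MvPolynomial.X (Sum.inl (s, t)) *
        ((adjugate (Mm N) i s).coeff a * (adjugate (Mm N) t i).coeff b +
          (adjugate (Mm N) t i).coeff a * (adjugate (Mm N) i s).coeff b)) +
      ∑ s, ∑ t, MvPolynomial.X (Sum.inr (s, t)) *
        ((adjugate (Mm N) i s).coeff a * (Polynomial.X * adjugate (Mm N) t i).coeff b +
          (adjugate (Mm N) t i).coeff a * (Polynomial.X * adjugate (Mm N) i s).coeff b))
    = (adjugate (Mm N) i i).coeff a * (det (Mm N)).coeff b +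
        (adjugate (Mm N) i i).coeff a * (det (Mm N)).coeff b := by
  classical
  rw [← Finset.sum_add_distrib]
  simp only [← Finset.sum_add_distrib]
  have step : ∀ s t : Fin N,
      MvPolynomial.X (Sum.inl (s, t)) *
        ((adjugate (Mm N) i s).coeff a * (adjugate (Mm N) t i).coeff b +
          (adjugate (Mm N) t i).coeff a * (adjugate (Mm N) i s).coeff b) +
      MvPolynomial.X (Sum.inr (s, t)) *
        ((adjugate (Mm N) i s).coeff a * (Polynomial.X * adjugate (Mm N) t i).coeff b +
          (adjugate (Mm N) t i).coeff a * (Polynomial.X * adjugate (Mm N) i s).coeff b)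
      = (adjugate (Mm N) i s).coeff a * (Mm N s t * adjugate (Mm N) t i).coeff b +
          (adjugate (Mm N) t i).coeff a * (Mm N s t * adjugate (Mm N) i s).coeff b := by
    intro s t
    have c1 := combine N s t (adjugate (Mm N) t i) b
    have c2 := combine N s t (adjugate (Mm N) i s) b
    linear_combination (adjugate (Mm N) i s).coeff a * c1 +
      (adjugate (Mm N) t i).coeff a * c2
  simp only [step]
  simp only [Finset.sum_add_distrib]
  congr 1
  · have h1 : ∀ s : Fin N,
        ∑ t, (adjugate (Mm N) i s).coeff a * (Mm N s t * adjugate (Mm N) t i).coeff b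
        = (adjugate (Mm N) i s).coeff a * (if s = i then (det (Mm N)).coeff b else 0) := by
      intro s
      rw [← Finset.mul_sum, ← Polynomial.finset_sum_coeff, sum_mul_adj]
      by_cases h : s = i <;> simp [h]
    simp [h1, mul_ite, Finset.sum_ite_eq']
  · rw [Finset.sum_comm]
    have h2 : ∀ t : Fin N,
        ∑ s, (adjugate (Mm N) t i).coeff a * (Mm N s t * adjugate (Mm N) i s).coeff b
        = (adjugate (Mm N) t i).coeff a * (if i = t then (det (Mm N)).coeff b else 0) := by
      intro t
      rw [← Finset.mul_sum, ← Polynomial.finset_sum_coeff, sum_adj_mul]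
      by_cases h : i = t <;> simp [h]
    simp [h2, mul_ite, Finset.sum_ite_eq]


lemma Qpoly_eq (N a : ℕ) : _root_.Qpoly N a = (det (Mm N)).coeff a := rfl

lemma pderiv_w_Q (N : ℕ) (s t : Fin N) (a : ℕ) :
    MvPolynomial.pderiv (Sum.inl (s, t)) (_root_.Qpoly N a) = (adjugate (Mm N) t s).coeff a := by
  rw [Qpoly_eq, ← coeff_pd, pd_det_w]

lemma pderiv_z_Q (N : ℕ) (s t : Fin N) (a : ℕ) :
    MvPolynomial.pderiv (Sum.inr (s, t)) (_root_.Qpoly N a) =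
      (Polynomial.X * adjugate (Mm N) t s).coeff a := by
  rw [Qpoly_eq, ← coeff_pd, pd_det_z]

lemma minor_eq (n : ℕ) (i : Fin (n + 1)) (b : ℕ) :
    _root_.QpolyMinor n i b = (adjugate (Mm (n + 1)) i i).coeff b := by
  rw [Matrix.adjugate_fin_succ_eq_det_submatrix]
  rw [show (i : ℕ) + (i : ℕ) = 2 * (i : ℕ) by ring, pow_mul]
  rw [show ((-1 : Polynomial (R (WZVars (n + 1)))) ^ 2 = 1) by ring, one_pow, one_mul]
  rfl

end Stmt13Aux

/-- For matrices of size `n + 1 ≥ 1`, every `1 ≤ i ≤ n + 1` and all `0 ≤ a, b ≤ n + 1`: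
`(Q_a, Q_b)_{i,W} + (Q_a, Q_{b+1})_{i,Z} = 2·Q_a·Q_b^{[i;i]}` and
`(Q_a, Q_b)_{i,W} + (Q_{a+1}, Q_b)_{i,Z} = 2·Q_a^{[i;i]}·Q_b`.
(Out-of-range polynomials `Q_m`, `Q_m^{[i;i]}` vanish automatically, being coefficients of
`λ^m` beyond the degree.) -/
theorem stmt13 (n : ℕ) (i : Fin (n + 1)) (a b : ℕ) (ha : a ≤ n + 1) (hb : b ≤ n + 1) :
    brW (n + 1) i (Qpoly (n + 1) a) (Qpoly (n + 1) b) +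
        brZ (n + 1) i (Qpoly (n + 1) a) (Qpoly (n + 1) (b + 1)) =
      (2 : ℂ) • (Qpoly (n + 1) a * QpolyMinor n i b) ∧
    brW (n + 1) i (Qpoly (n + 1) a) (Qpoly (n + 1) b) +
        brZ (n + 1) i (Qpoly (n + 1) (a + 1)) (Qpoly (n + 1) b) =
      (2 : ℂ) • (QpolyMinor n i a * Qpoly (n + 1) b) := by
  classical
  constructor
  · simp only [brW, brZ, Stmt13Aux.pderiv_w_Q, Stmt13Aux.pderiv_z_Q, Polynomial.coeff_X_mul]
    rw [two_smul ℂ, Stmt13Aux.Qpoly_eq, Stmt13Aux.minor_eq]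
    exact Stmt13Aux.conj1 (n + 1) i a b
  · simp only [brW, brZ, Stmt13Aux.pderiv_w_Q, Stmt13Aux.pderiv_z_Q, Polynomial.coeff_X_mul]
    rw [two_smul ℂ, Stmt13Aux.minor_eq, Stmt13Aux.Qpoly_eq]
    exact Stmt13Aux.conj2 (n + 1) i a b
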